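/- Let E > 0 and 0 ≤ y ≤ 1 be real numbers, let M(E,y) be the 2×2 complex matrix E·!![1+y², y·√(1−y²); y·√(1−y²), 1−y²], and set Q = exp(−i·(2π/E)·M(E,y)). With X₁ = (1/√2)·(√(1+y), √(1−y))ᵀ, X₂ = (1/√2)·(−√(1−y), √(1+y))ᵀ, and s(y) = (y, √(1−y²))ᵀ, the following hold: Q·X₁ = e^{−i2πy}·X₁, Q·X₂ = e^{i2πy}·X₂, and for every natural number m, Q^m·s(y) = √((1+y)/2)·e^{−i2mπy}·X₁ + √((1−y)/2)·e^{i2mπy}·X₂. -/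

import Mathlib

open Matrix

attribute [local instance] Matrix.linftyOpNormedRing Matrix.linftyOpNormedAlgebra

lemma exp_mulVec_eigen (A : Matrix (Fin 2) (Fin 2) ℂ) (v : Fin 2 → ℂ) (μ : ℂ)
    (h : A.mulVec v = μ • v) :
    (NormedSpace.exp A).mulVec v = Complex.exp μ • v := by
  have hn : ∀ n : ℕ, (A ^ n).mulVec v = μ ^ n • v := by
    intro n
    induction n with
    | zero => simp [Matrix.one_mulVec]
    | succ n ih =>
      rw [pow_succ, ← Matrix.mulVec_mulVec, h, Matrix.mulVec_smul, ih, pow_succ]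
      rw [smul_smul, mul_comm]
  let f : Matrix (Fin 2) (Fin 2) ℂ →L[ℂ] (Fin 2 → ℂ) :=
    LinearMap.toContinuousLinearMap
      { toFun := fun B => B.mulVec v
        map_add' := fun B C => Matrix.add_mulVec B C v
        map_smul' := fun c B => Matrix.smul_mulVec c B v }
  have hf : ∀ B, f B = B.mulVec v := fun _ => rfl
  have hsum : Summable fun n : ℕ => (n.factorial⁻¹ : ℂ) • A ^ n :=
    NormedSpace.expSeries_summable' A
  have := f.map_tsum hsum
  rw [NormedSpace.exp_eq_tsum ℂ, ← hf, this]
  simp_rw [_root_.map_smul, hf, hn, smul_smul]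
  rw [Summable.tsum_smul_const, Complex.exp_eq_exp_ℂ, NormedSpace.exp_eq_tsum ℂ]
  · simp only [smul_eq_mul]
  · exact (NormedSpace.expSeries_summable' μ).congr fun n => smul_eq_mul _ _

lemma pow_mulVec_eigen (Q : Matrix (Fin 2) (Fin 2) ℂ) (v : Fin 2 → ℂ) (μ : ℂ)
    (h : Q.mulVec v = μ • v) (m : ℕ) : (Q ^ m).mulVec v = μ ^ m • v := by
  induction m with
  | zero => simp [Matrix.one_mulVec]
  | succ n ih =>
    rw [pow_succ, ← Matrix.mulVec_mulVec, h, Matrix.mulVec_smul, ih, pow_succ]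
    rw [smul_smul, mul_comm]


/-- The matrix representation of the search Hamiltonian on its invariant plane. -/
noncomputable def searchHamiltonianMatrix (E y : ℝ) : Matrix (Fin 2) (Fin 2) ℂ :=
  (E : ℂ) • !![((1 + y ^ 2 : ℝ) : ℂ), ((y * Real.sqrt (1 - y ^ 2) : ℝ) : ℂ);
               ((y * Real.sqrt (1 - y ^ 2) : ℝ) : ℂ), ((1 - y ^ 2 : ℝ) : ℂ)]

/-- **Formulas (2.22)–(2.23)** of Chen–Diao: the unitary `Q = e^{−iH(2π/E)}`
acts on the eigenvectors by phases `e^{∓i2πy}`, and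
`Qᵐ|s⟩ = √((1+y)/2)·e^{−i2mπy}·X₁ + √((1−y)/2)·e^{i2mπy}·X₂`. -/
theorem counting_unitary_Q_action (E y : ℝ) (hE : 0 < E) (hy0 : 0 ≤ y) (hy1 : y ≤ 1)
    (Q : Matrix (Fin 2) (Fin 2) ℂ)
    (hQ : Q = NormedSpace.exp
        ((-(Complex.I * ((2 * Real.pi / E : ℝ) : ℂ))) • searchHamiltonianMatrix E y))
    (X₁ X₂ : Fin 2 → ℂ)
    (hX₁ : X₁ = (1 / (Real.sqrt 2 : ℂ)) •
        ![(Real.sqrt (1 + y) : ℂ), (Real.sqrt (1 - y) : ℂ)])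
    (hX₂ : X₂ = (1 / (Real.sqrt 2 : ℂ)) •
        ![-(Real.sqrt (1 - y) : ℂ), (Real.sqrt (1 + y) : ℂ)]) :
    Q.mulVec X₁ = Complex.exp (-(Complex.I * ((2 * Real.pi * y : ℝ) : ℂ))) • X₁ ∧
    Q.mulVec X₂ = Complex.exp (Complex.I * ((2 * Real.pi * y : ℝ) : ℂ)) • X₂ ∧
    ∀ m : ℕ, (Q ^ m).mulVec ![(y : ℂ), (Real.sqrt (1 - y ^ 2) : ℂ)] =
      ((Real.sqrt ((1 + y) / 2) : ℂ) *
          Complex.exp (-(Complex.I * ((2 * m * Real.pi * y : ℝ) : ℂ)))) • X₁ +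
      ((Real.sqrt ((1 - y) / 2) : ℂ) *
          Complex.exp (Complex.I * ((2 * m * Real.pi * y : ℝ) : ℂ))) • X₂ := by
  have h1 : (0:ℝ) ≤ 1 + y := by linarith
  have h2 : (0:ℝ) ≤ 1 - y := by linarith
  have ha : Real.sqrt (1+y) * Real.sqrt (1+y) = 1 + y := Real.mul_self_sqrt h1
  have hb : Real.sqrt (1-y) * Real.sqrt (1-y) = 1 - y := Real.mul_self_sqrt h2
  have hr : Real.sqrt 2 * Real.sqrt 2 = 2 := Real.mul_self_sqrt (by norm_num)
  have hab : Real.sqrt (1 - y^2) = Real.sqrt (1+y) * Real.sqrt (1-y) := by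
    rw [show (1 - y^2 : ℝ) = (1+y)*(1-y) by ring, Real.sqrt_mul h1]
  have hs2 : (Real.sqrt 2 : ℂ) ≠ 0 := by norm_cast; positivity
  have hE' : (E : ℂ) ≠ 0 := Complex.ofReal_ne_zero.mpr hE.ne'
  -- eigenvector equations for the Hamiltonian
  have hM1 : (searchHamiltonianMatrix E y).mulVec X₁ = ((E * (1 + y) : ℝ) : ℂ) • X₁ := by
    subst hX₁
    funext i
    fin_cases i <;>
      simp only [searchHamiltonianMatrix, Matrix.smul_mulVec, Matrix.mulVec_smul, Matrix.smul_apply, Matrix.of_apply,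
        Matrix.mulVec, dotProduct, Fin.sum_univ_two, Pi.smul_apply, smul_eq_mul,
        Matrix.cons_val', Matrix.cons_val_zero, Matrix.cons_val_one, Matrix.head_cons,
        Matrix.empty_val', Matrix.cons_val_fin_one, Matrix.head_fin_const, Fin.isValue] <;>
      push_cast <;> field_simp <;> norm_cast <;> rw [hab]
    · linear_combination (y * Real.sqrt (1+y)) * hb
    · linear_combination (y * Real.sqrt (1-y)) * ha
  have hM2 : (searchHamiltonianMatrix E y).mulVec X₂ = ((E * (1 - y) : ℝ) : ℂ) • X₂ := by
    subst hX₂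
    funext i
    fin_cases i <;>
      simp only [searchHamiltonianMatrix, Matrix.smul_mulVec, Matrix.mulVec_smul, Matrix.smul_apply, Matrix.of_apply,
        Matrix.mulVec, dotProduct, Fin.sum_univ_two, Pi.smul_apply, smul_eq_mul,
        Matrix.cons_val', Matrix.cons_val_zero, Matrix.cons_val_one, Matrix.head_cons,
        Matrix.empty_val', Matrix.cons_val_fin_one, Matrix.head_fin_const, Fin.isValue] <;>
      push_cast <;> field_simp <;> norm_cast <;> rw [hab]
    · linear_combination (y * Real.sqrt (1-y)) * ha
    · linear_combination -(y * Real.sqrt (1+y)) * hb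
  set c : ℂ := -(Complex.I * ((2 * Real.pi / E : ℝ) : ℂ)) with hc
  have hA1 : ((c • searchHamiltonianMatrix E y)).mulVec X₁
      = (c * ((E * (1 + y) : ℝ) : ℂ)) • X₁ := by
    rw [Matrix.smul_mulVec, hM1, smul_smul]
  have hA2 : ((c • searchHamiltonianMatrix E y)).mulVec X₂
      = (c * ((E * (1 - y) : ℝ) : ℂ)) • X₂ := by
    rw [Matrix.smul_mulVec, hM2, smul_smul]
  have hμ1 : Complex.exp (c * ((E * (1 + y) : ℝ) : ℂ))
      = Complex.exp (-(Complex.I * ((2 * Real.pi * y : ℝ) : ℂ))) := by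
    have : c * ((E * (1 + y) : ℝ) : ℂ)
        = -(2 * Real.pi * Complex.I) + -(Complex.I * ((2 * Real.pi * y : ℝ) : ℂ)) := by
      rw [hc]; push_cast; field_simp; ring
    rw [this, Complex.exp_add, show -(2 * (Real.pi:ℂ) * Complex.I) = -(2*Real.pi*Complex.I) from rfl]
    rw [show (-(2 * (Real.pi:ℂ) * Complex.I)) = -(2 * Real.pi * Complex.I) from rfl]
    rw [Complex.exp_neg, Complex.exp_two_pi_mul_I]
    simp
  have hμ2 : Complex.exp (c * ((E * (1 - y) : ℝ) : ℂ))
      = Complex.exp (Complex.I * ((2 * Real.pi * y : ℝ) : ℂ)) := by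
    have : c * ((E * (1 - y) : ℝ) : ℂ)
        = -(2 * Real.pi * Complex.I) + (Complex.I * ((2 * Real.pi * y : ℝ) : ℂ)) := by
      rw [hc]; push_cast; field_simp; ring
    rw [this, Complex.exp_add, Complex.exp_neg, Complex.exp_two_pi_mul_I]
    simp
  have hQ1 : Q.mulVec X₁ = Complex.exp (-(Complex.I * ((2 * Real.pi * y : ℝ) : ℂ))) • X₁ := by
    rw [hQ, exp_mulVec_eigen _ _ _ hA1, hμ1]
  have hQ2 : Q.mulVec X₂ = Complex.exp (Complex.I * ((2 * Real.pi * y : ℝ) : ℂ)) • X₂ := by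
    rw [hQ, exp_mulVec_eigen _ _ _ hA2, hμ2]
  refine ⟨hQ1, hQ2, fun m => ?_⟩
  -- decomposition of the initial state
  have hs : (![(y : ℂ), (Real.sqrt (1 - y ^ 2) : ℂ)] : Fin 2 → ℂ)
      = ((Real.sqrt ((1 + y) / 2) : ℝ) : ℂ) • X₁ + ((Real.sqrt ((1 - y) / 2) : ℝ) : ℂ) • X₂ := by
    have hca : Real.sqrt ((1 + y) / 2) = Real.sqrt (1 + y) / Real.sqrt 2 := by
      rw [Real.sqrt_div h1]
    have hcb : Real.sqrt ((1 - y) / 2) = Real.sqrt (1 - y) / Real.sqrt 2 := by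
      rw [Real.sqrt_div h2]
    subst hX₁ hX₂
    funext i
    fin_cases i <;>
      simp only [hca, hcb, Pi.add_apply, Pi.smul_apply, smul_eq_mul, Matrix.cons_val_zero,
        Matrix.cons_val_one, Matrix.head_cons, Fin.isValue] <;>
      push_cast <;> field_simp <;> norm_cast
    · linear_combination y * hr - ha + hb
    · linear_combination (Real.sqrt (1+y) * Real.sqrt (1-y)) * hr + (Real.sqrt 2 * Real.sqrt 2) * hab
  rw [hs, Matrix.mulVec_add, Matrix.mulVec_smul, Matrix.mulVec_smul,
    pow_mulVec_eigen Q X₁ _ hQ1 m, pow_mulVec_eigen Q X₂ _ hQ2 m,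
    ← Complex.exp_nat_mul, ← Complex.exp_nat_mul, smul_smul, smul_smul]
  congr 2
  · congr 1
    push_cast
    ring
  · congr 1
    push_cast
    ring
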